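/- If integers x_1, x_2, x_3 satisfy 3x_1^4 + x_2^4 = x_3^4, then x_1 = 0. -/

import Mathlib

set_option maxHeartbeats 1600000

private lemma zA : ∀ b c : ZMod 16, 3 + b^4 ≠ c^4 := by decide
private lemma zc1 : ∀ r : ZMod 16, 6*r^4 ≠ 2 := by decide
private lemma zc2 : ∀ r : ZMod 16, 2*r^4 ≠ 4 := by decide
private lemma zm3 : ∀ x y : ZMod 3, x^2 + y^2 = 0 → x = 0 ∧ y = 0 := by decide
private lemma zodd4 (u : ℤ) (hu : Odd u) : ((u : ZMod 16))^4 = 1 := by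
  obtain ⟨j, rfl⟩ := hu
  push_cast
  have : ∀ x : ZMod 16, (2*x+1)^4 = 1 := by decide
  exact this j

private lemma iscop_abs {a b : ℤ} (h : IsCoprime a b) : IsCoprime |a| |b| := by
  rcases abs_choice a with h1 | h1 <;> rcases abs_choice b with h2 | h2 <;> rw [h1, h2]
  · exact h
  · exact h.neg_right
  · exact h.neg_left
  · exact h.neg_left.neg_right

private lemma abs_emod_two (a : ℤ) : |a| % 2 = a % 2 := by
  rcases abs_choice a with h | h <;> rw [h] <;> omega

private lemma L2sq (a b c : ℤ) (ha : 0 < a) (hab : IsCoprime a b) (h : a * b = c ^ 2) :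
    ∃ r : ℤ, a = r ^ 2 := by
  obtain ⟨r, hr | hr⟩ := Int.sq_of_isCoprime hab h
  · exact ⟨r, hr⟩
  · exfalso; nlinarith [sq_nonneg r]

private lemma L4 (a b c : ℤ) (ha : 0 < a) (hb : 0 < b) (hab : IsCoprime a b)
    (h : a * b = c ^ 4) : ∃ r s : ℤ, a = r ^ 4 ∧ b = s ^ 4 := by
  have h2 : a * b = (c^2)^2 := by rw [h]; ring
  obtain ⟨r0, hr0⟩ := L2sq a b (c^2) ha hab h2
  obtain ⟨s0, hs0⟩ := L2sq b a (c^2) hb hab.symm (by rw [mul_comm]; exact h2)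
  have hrs : IsCoprime r0 s0 := by
    have h1 : IsCoprime (r0^2) (s0^2) := by rw [← hr0, ← hs0]; exact hab
    exact (IsCoprime.of_isCoprime_of_dvd_left
      (IsCoprime.of_isCoprime_of_dvd_right h1 (dvd_pow_self s0 two_ne_zero))
      (dvd_pow_self r0 two_ne_zero))
  have hprod : (r0*s0)^2 = (c^2)^2 := by rw [← h2, hr0, hs0]; ring
  have hcase : r0*s0 = c^2 ∨ r0*s0 = -(c^2) := sq_eq_sq_iff_eq_or_eq_neg.mp hprod
  have hr4 : ∃ r : ℤ, a = r ^ 4 := by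
    rcases hcase with hc1 | hc1
    · obtain ⟨g, hg | hg⟩ := Int.sq_of_isCoprime hrs hc1
      · exact ⟨g, by rw [hr0, hg]; ring⟩
      · exact ⟨g, by rw [hr0, hg]; ring⟩
    · have : r0 * (-s0) = c^2 := by linear_combination -hc1
      obtain ⟨g, hg | hg⟩ := Int.sq_of_isCoprime (hrs.neg_right) this
      · exact ⟨g, by rw [hr0, hg]; ring⟩
      · exact ⟨g, by rw [hr0, hg]; ring⟩
  have hs4 : ∃ s : ℤ, b = s ^ 4 := by
    rcases hcase with hc1 | hc1
    · have : s0 * r0 = c^2 := by linear_combination hc1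
      obtain ⟨g, hg | hg⟩ := Int.sq_of_isCoprime hrs.symm this
      · exact ⟨g, by rw [hs0, hg]; ring⟩
      · exact ⟨g, by rw [hs0, hg]; ring⟩
    · have : s0 * (-r0) = c^2 := by linear_combination -hc1
      obtain ⟨g, hg | hg⟩ := Int.sq_of_isCoprime (hrs.symm.neg_right) this
      · exact ⟨g, by rw [hs0, hg]; ring⟩
      · exact ⟨g, by rw [hs0, hg]; ring⟩
  obtain ⟨r, hr⟩ := hr4; obtain ⟨s, hs⟩ := hs4
  exact ⟨r, s, hr, hs⟩

private lemma L4three (a b c : ℤ) (ha : 0 < a) (hb : 0 < b) (hab : IsCoprime a b)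
    (h : a * b = 3 * c ^ 4) :
    (∃ r s : ℤ, a = 3 * r ^ 4 ∧ b = s ^ 4) ∨ (∃ r s : ℤ, a = r ^ 4 ∧ b = 3 * s ^ 4) := by
  have h3 : (3:ℤ) ∣ a * b := ⟨c^4, h⟩
  rcases (Int.prime_three.dvd_mul.mp h3) with h3a | h3b
  · left
    obtain ⟨a', rfl⟩ := h3a
    have ha' : 0 < a' := by nlinarith
    have heq : a' * b = c ^ 4 := by
      apply mul_left_cancel₀ (a := (3:ℤ)) (by norm_num); linarith
    have hab' : IsCoprime a' b := IsCoprime.of_isCoprime_of_dvd_left hab ⟨3, by ring⟩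
    obtain ⟨r, s, hr, hs⟩ := L4 a' b c ha' hb hab' heq
    exact ⟨r, s, by rw [hr], hs⟩
  · right
    obtain ⟨b', rfl⟩ := h3b
    have hb' : 0 < b' := by nlinarith
    have heq : a * b' = c ^ 4 := by
      apply mul_left_cancel₀ (a := (3:ℤ)) (by norm_num); linarith
    have hab' : IsCoprime a b' := IsCoprime.of_isCoprime_of_dvd_right hab ⟨3, by ring⟩
    obtain ⟨r, s, hr, hs⟩ := L4 a b' c ha hb' hab' heq
    exact ⟨r, s, hr, by rw [hs]⟩

private lemma key : ∀ n : ℕ, ∀ a b c : ℤ, c.natAbs ≤ n → 3*a^4 + b^4 = c^4 → a = 0 := by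
  intro n
  induction n using Nat.strong_induction_on with
  | _ n IH =>
  intro a b c hcn h
  -- normalize b, c to be nonnegative
  have habs4 : ∀ x : ℤ, ((x.natAbs : ℤ))^4 = x^4 := by
    intro x
    rw [← Int.abs_eq_natAbs, pow_abs, abs_of_nonneg (by positivity)]
  suffices H : ∀ b c : ℤ, 0 ≤ b → 0 ≤ c → c.natAbs ≤ n → 3*a^4 + b^4 = c^4 → a = 0 by
    refine H (b.natAbs : ℤ) (c.natAbs : ℤ) (by positivity) (by positivity) ?_ ?_
    · rwa [Int.natAbs_natCast]
    · rw [habs4, habs4]; exact h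
  clear hcn h b c
  intro b c hb0 hc0 hcn h
  -- trivial case c = 0
  rcases eq_or_ne c 0 with rfl | hcne
  · have h4 : a^4 = 0 := by nlinarith [sq_nonneg (a^2), sq_nonneg (b^2)]
    exact pow_eq_zero_iff (by norm_num) |>.mp h4
  -- gcd descent
  rcases Nat.lt_or_ge (Int.gcd b c) 2 with hg | hg
  · -- gcd is 0 or 1
    have hgne : Int.gcd b c ≠ 0 := by
      intro h0
      exact hcne (Int.natAbs_eq_zero.mp (Nat.eq_zero_of_gcd_eq_zero_right h0))
    have hg1 : Int.gcd b c = 1 := by omega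
    have hcop : IsCoprime b c := Int.isCoprime_iff_gcd_eq_one.mpr hg1
    -- ===================== main coprime branch =====================
    by_contra ha0
    have ha2 : 0 < a^2 := by
      rcases lt_or_gt_of_ne ha0 with h' | h' <;> nlinarith only [h']
    have ha4 : 0 < a^4 := by nlinarith only [ha2]
    have hcpos : 0 < c := lt_of_le_of_ne hc0 (Ne.symm hcne)
    have hbltc : b < c := by
      by_contra hle
      push_neg at hle
      nlinarith only [pow_le_pow_left₀ hc0 hle 4, h, ha4]
    -- a is even
    have hae : Even a := by
      rcases Int.even_or_odd a with h' | h'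
      · exact h'
      · exfalso
        have hcast := congrArg (fun z : ℤ => (z : ZMod 16)) h
        push_cast at hcast
        rw [zodd4 a h'] at hcast
        refine zA (b : ZMod 16) (c : ZMod 16) ?_
        rw [← hcast]; ring
    -- b is odd
    have hbo : Odd b := by
      rcases Int.even_or_odd b with h' | h'
      · exfalso
        obtain ⟨a0, ha'⟩ := hae
        obtain ⟨b0, hb'⟩ := h'
        have h2c4 : (2:ℤ) ∣ c^4 := ⟨24*a0^4 + 8*b0^4, by rw [← h, ha', hb']; ring⟩
        have h2c : (2:ℤ) ∣ c := Int.prime_two.dvd_of_dvd_pow h2c4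
        have h2b : (2:ℤ) ∣ b := ⟨b0, by rw [hb']; ring⟩
        have := hcop.isUnit_of_dvd' h2b h2c
        rw [Int.isUnit_iff] at this
        omega
      · exact h'
    -- c is odd
    have hco : Odd c := by
      rcases Int.even_or_odd c with h' | h'
      · exfalso
        have he4 : Even (c^4) := (Int.even_pow.mpr ⟨h', by norm_num⟩)
        have ho4 : Odd (3*a^4 + b^4) := by
          have hea : Even (3*a^4) :=
            ((Int.even_pow.mpr ⟨hae, by norm_num⟩)).mul_left 3
          exact hea.add_odd (Int.odd_pow.mpr (Or.inl hbo))
        rw [h] at ho4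
        exact (Int.not_odd_iff_even.mpr he4) ho4
      · exact h'
    obtain ⟨b0, hb'⟩ := hbo
    obtain ⟨c0, hc'⟩ := hco
    have hb1 : 1 ≤ b := by omega
    have hb0le : 0 ≤ b0 := by omega
    have hc0le : 0 ≤ c0 := by omega
    -- define m, p, q
    set m : ℤ := 2*b0^2 + 2*b0 + 2*c0^2 + 2*c0 + 1 with hmdef
    set p : ℤ := c0 + b0 + 1 with hpdef
    set q : ℤ := c0 - b0 with hqdef
    have hm : b^2 + c^2 = 2*m := by rw [hb', hc', hmdef]; ring
    have hp : c + b = 2*p := by rw [hb', hc', hpdef]; ring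
    have hq : c - b = 2*q := by rw [hb', hc', hqdef]; ring
    have hppos : 0 < p := by rw [hpdef]; omega
    have hqpos : 0 < q := by rw [hqdef]; omega
    have hmpos : 0 < m := by
      rw [hmdef]; nlinarith only [hb0le, hc0le, sq_nonneg b0, sq_nonneg c0]
    have hmain : 3*a^4 = 8*p*q*m := by
      rw [hpdef, hqdef, hmdef]
      have h2 := h
      rw [hb', hc'] at h2
      linear_combination h2
    have hm2 : p^2 + q^2 = m := by rw [hpdef, hqdef, hmdef]; ring
    -- coprimality p q
    have hpq : IsCoprime p q := by
      obtain ⟨u, v, huv⟩ := hcop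
      refine ⟨u + v, v - u, ?_⟩
      apply mul_left_cancel₀ (show (2:ℤ) ≠ 0 by norm_num)
      linear_combination 2*huv - (u+v)*hp - (v-u)*hq
    -- coprimality m with 8pq
    have hmp : IsCoprime m p := by
      have h1 : IsCoprime (q^2) p := (hpq.symm).pow_left
      have h2 : IsCoprime (q^2 + p*p) p := h1.add_mul_left_left p
      have h3 : q^2 + p*p = m := by rw [← hm2]; ring
      rwa [h3] at h2
    have hmq : IsCoprime m q := by
      have h1 : IsCoprime (p^2) q := hpq.pow_left
      have h2 : IsCoprime (p^2 + q*q) q := h1.add_mul_left_left q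
      have h3 : p^2 + q*q = m := by rw [← hm2]; ring
      rwa [h3] at h2
    have hm2' : IsCoprime m 2 := by
      refine ⟨1, -(b0^2 + b0 + c0^2 + c0), ?_⟩
      rw [hmdef]; ring
    have hm8 : IsCoprime m (8*p*q) := by
      have h1 : IsCoprime m (2*(2*(2*(p*q)))) :=
        hm2'.mul_right (hm2'.mul_right (hm2'.mul_right (hmp.mul_right hmq)))
      rwa [show (2:ℤ)*(2*(2*(p*q))) = 8*p*q by ring] at h1
    -- first extraction
    have hprod1 : m * (8*p*q) = 3*a^4 := by linear_combination -hmain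
    have h8pqpos : 0 < 8*p*q := by nlinarith only [hppos, hqpos]
    rcases L4three m (8*p*q) a hmpos h8pqpos hm8 hprod1 with ⟨r, s, hm3, _⟩ | ⟨r, s, hme, h8⟩
    · -- m = 3 r^4 : impossible since 3 ∤ p² + q²
      have hcast := congrArg (fun z : ℤ => (z : ZMod 3)) (hm2.trans hm3)
      push_cast at hcast
      rw [show ((3:ZMod 3)) = 0 by decide, zero_mul] at hcast
      obtain ⟨hp3, hq3⟩ := zm3 _ _ hcast
      have hdp : (3:ℤ) ∣ p := by
        rwa [ZMod.intCast_zmod_eq_zero_iff_dvd] at hp3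
      have hdq : (3:ℤ) ∣ q := by
        rwa [ZMod.intCast_zmod_eq_zero_iff_dvd] at hq3
      have := hpq.isUnit_of_dvd' hdp hdq
      rw [Int.isUnit_iff] at this
      omega
    -- m = r^4, 8pq = 3 s^4
    have h2S : (2:ℤ) ∣ s := by
      have hd : (2:ℤ) ∣ 3*s^4 := ⟨4*p*q, by linarith⟩
      rcases Int.prime_two.dvd_mul.mp hd with h' | h'
      · norm_num at h'
      · exact Int.prime_two.dvd_of_dvd_pow h'
    obtain ⟨w, rfl⟩ := h2S
    have hpq6 : p*q = 6*w^4 := by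
      apply mul_left_cancel₀ (show (8:ℤ) ≠ 0 by norm_num)
      linear_combination h8
    have hm4 : p^2 + q^2 = r^4 := hm2.trans hme
    -- Pythagorean classification
    have htrip : PythagoreanTriple p q (r^2) := by
      show p*p + q*q = r^2 * r^2
      linear_combination hm4
    obtain ⟨m0, n0, hleg, hzz, hco0, hpar⟩ :=
      PythagoreanTriple.coprime_classification.mp
        ⟨htrip, Int.isCoprime_iff_gcd_eq_one.mp hpq⟩
    have hOP : 0 < m0^2 - n0^2 ∧ 0 < m0*n0 ∧ p*q = 2*(m0*n0)*(m0^2 - n0^2) := by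
      rcases hleg with ⟨h1, h2⟩ | ⟨h1, h2⟩
      · exact ⟨by rw [← h1]; exact hppos, by rw [h2] at hqpos; linarith only [hqpos],
          by rw [h1, h2]; ring⟩
      · exact ⟨by rw [← h2]; exact hqpos, by rw [h1] at hppos; linarith only [hppos],
          by rw [h1, h2]; ring⟩
    obtain ⟨hO, hE, hprod2⟩ := hOP
    have hzr : m0^2 + n0^2 = r^2 := by
      rcases hzz with h' | h'
      · exact h'.symm
      · exfalso; nlinarith only [h', hE, sq_nonneg r, sq_nonneg (m0-n0)]
    set K : ℤ := |m0| with hKdef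
    set L : ℤ := |n0| with hLdef
    have hK2 : K^2 = m0^2 := sq_abs m0
    have hL2 : L^2 = n0^2 := sq_abs n0
    have hKL : K * L = m0 * n0 := by rw [hKdef, hLdef, ← abs_mul, abs_of_pos hE]
    have hK0 : 0 ≤ K := abs_nonneg m0
    have hL0 : 0 ≤ L := abs_nonneg n0
    have hKpos : 0 < K := by nlinarith only [hK0, hL0, hKL, hE]
    have hLpos : 0 < L := by nlinarith only [hK0, hL0, hKL, hE]
    have hKgtL : L < K := by nlinarith only [hO, hK2, hL2, hK0, hL0]
    have hcoKL : IsCoprime K L :=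
      iscop_abs (Int.isCoprime_iff_gcd_eq_one.mpr hco0)
    have hparKL : K % 2 = 0 ∧ L % 2 = 1 ∨ K % 2 = 1 ∧ L % 2 = 0 := by
      rw [hKdef, hLdef, abs_emod_two, abs_emod_two]
      exact hpar
    have hPodd : Odd (K + L) := by rw [Int.odd_iff]; omega
    have hModd : Odd (K - L) := by rw [Int.odd_iff]; omega
    have hfour : K*(L*((K-L)*(K+L))) = 3*w^4 := by
      apply mul_left_cancel₀ (show (2:ℤ) ≠ 0 by norm_num)
      linear_combination hpq6 - hprod2 + 2*(K^2 - L^2)*hKL + 2*(m0*n0)*hK2 - 2*(m0*n0)*hL2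
    -- pairwise coprimality of K, L, K-L, K+L
    obtain ⟨u0, v0, huv0⟩ := id hcoKL
    have hcK_M : IsCoprime K (K-L) := ⟨u0 + v0, -v0, by linear_combination huv0⟩
    have hcK_P : IsCoprime K (K+L) := ⟨u0 - v0, v0, by linear_combination huv0⟩
    have hcL_M : IsCoprime L (K-L) := ⟨u0 + v0, u0, by linear_combination huv0⟩
    have hcL_P : IsCoprime L (K+L) := ⟨v0 - u0, u0, by linear_combination huv0⟩
    have hcM_P : IsCoprime (K-L) (K+L) := by
      obtain ⟨j, hj⟩ : ∃ j, K + L = 2*j + 1 := ⟨(K+L-1)/2, by omega⟩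
      exact ⟨-(j*(u0 - v0)), 1 - j*(u0 + v0), by linear_combination (-2*j)*huv0 + hj⟩
    have hMpos : 0 < K - L := by omega
    have hPpos : 0 < K + L := by omega
    -- second extraction chain
    have hcop1 : IsCoprime K (L*((K-L)*(K+L))) :=
      hcoKL.mul_right (hcK_M.mul_right hcK_P)
    have hpos1 : 0 < L*((K-L)*(K+L)) := by positivity
    rcases L4three K (L*((K-L)*(K+L))) w hKpos hpos1 hcop1 hfour with
      ⟨r1, s1, hKv, hrest⟩ | ⟨r1, s1, hKv, hrest⟩
    · -- K = 3 r1^4 : contradiction mod 16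
      have hcop2 : IsCoprime L ((K-L)*(K+L)) := hcL_M.mul_right hcL_P
      have hpos2 : 0 < (K-L)*(K+L) := by positivity
      obtain ⟨l1, s2, hLv, hrest2⟩ := L4 L ((K-L)*(K+L)) s1 hLpos hpos2 hcop2 hrest
      obtain ⟨u, v, hMv, hPv⟩ := L4 (K-L) (K+L) s2 hMpos hPpos hcM_P hrest2
      have hsum : u^4 + v^4 = 6*r1^4 := by linear_combination -hMv - hPv + 2*hKv
      have hou : Odd u := by
        have := hModd; rw [hMv] at this
        exact (Int.odd_pow.mp this).resolve_right (by norm_num)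
      have hov : Odd v := by
        have := hPodd; rw [hPv] at this
        exact (Int.odd_pow.mp this).resolve_right (by norm_num)
      have hcast := congrArg (fun z : ℤ => (z : ZMod 16)) hsum
      push_cast at hcast
      rw [zodd4 u hou, zodd4 v hov] at hcast
      exact zc1 (r1 : ZMod 16) (by rw [← hcast]; norm_num)
    · -- K = r1^4
      have hcop2 : IsCoprime L ((K-L)*(K+L)) := hcL_M.mul_right hcL_P
      have hpos2 : 0 < (K-L)*(K+L) := by positivity
      rcases L4three L ((K-L)*(K+L)) s1 hLpos hpos2 hcop2 hrest with
        ⟨l1, s2, hLv, hrest2⟩ | ⟨l1, s2, hLv, hrest2⟩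
      · -- L = 3 l1^4 : the descent case!
        obtain ⟨u, v, hMv, hPv⟩ := L4 (K-L) (K+L) s2 hMpos hPpos hcM_P hrest2
        have hnew : 3*l1^4 + r1^4 = v^4 := by linear_combination hPv - hKv - hLv
        have hKLr : K^2 + L^2 = r^2 := by linear_combination hzr + hK2 + hL2
        have hK1 : 1 ≤ K := hKpos
        have hL1 : 1 ≤ L := hLpos
        have hv4 : v^4 ≤ r^2 := by
          nlinarith only [hPv, hKLr, mul_nonneg (sub_nonneg.mpr hK1) (le_of_lt hKpos),
            mul_nonneg (sub_nonneg.mpr hL1) (le_of_lt hLpos)]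
        have h2r4 : 2*r^4 = b^2 + c^2 := by linear_combination -hm - 2*hme
        have hrc : r^2 < c := by
          by_contra hcr
          push_neg at hcr
          have hcb : 0 < (c-b)*(c+b) :=
            mul_pos (by linarith only [hbltc]) (by linarith only [hb1, hbltc])
          have h1 : c*c ≤ r^2*r^2 := mul_le_mul hcr hcr (le_of_lt hcpos) (sq_nonneg r)
          nlinarith only [h2r4, hcb, h1]
        have hv4pos : 0 < v^4 := by linarith only [hPv, hKpos, hLpos]
        have hvne : v ≠ 0 := by
          intro h0; rw [h0] at hv4pos; norm_num at hv4pos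
        have habsv : |v| ≤ v^4 := by
          calc |v| ≤ |v|^4 := le_self_pow₀ (Int.one_le_abs hvne) (by norm_num)
          _ = v^4 := by rw [pow_abs, abs_of_nonneg (le_of_lt hv4pos)]
        have hnat : v.natAbs < c.natAbs := by
          have h1 : (v.natAbs : ℤ) < (c.natAbs : ℤ) := by
            rw [← Int.abs_eq_natAbs, ← Int.abs_eq_natAbs, abs_of_pos hcpos]
            calc |v| ≤ v^4 := habsv
            _ ≤ r^2 := hv4
            _ < c := hrc
          exact_mod_cast h1
        have hl1 : l1 = 0 := IH v.natAbs (lt_of_lt_of_le hnat hcn) l1 r1 v le_rfl hnew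
        rw [hl1] at hLv
        norm_num at hLv
        exact ne_of_gt hLpos hLv
      · -- L = l1^4, (K-L)(K+L) = 3 s2^4
        rcases L4three (K-L) (K+L) s2 hMpos hPpos hcM_P hrest2 with
          ⟨u, v, hMv, hPv⟩ | ⟨u, v, hMv, hPv⟩
        · -- K - L = 3u^4, K + L = v^4
          have hsum : v^4 + 3*u^4 = 2*r1^4 := by linear_combination -hMv - hPv + 2*hKv
          have hou : Odd u := by
            have h' := hModd; rw [hMv] at h'
            have := (Int.odd_mul.mp h').2
            exact (Int.odd_pow.mp this).resolve_right (by norm_num)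
          have hov : Odd v := by
            have := hPodd; rw [hPv] at this
            exact (Int.odd_pow.mp this).resolve_right (by norm_num)
          have hcast := congrArg (fun z : ℤ => (z : ZMod 16)) hsum
          push_cast at hcast
          rw [zodd4 u hou, zodd4 v hov] at hcast
          exact zc2 (r1 : ZMod 16) (by rw [← hcast]; norm_num)
        · -- K - L = u^4, K + L = 3v^4
          have hsum : 3*v^4 + u^4 = 2*r1^4 := by linear_combination -hMv - hPv + 2*hKv
          have hou : Odd u := by
            have := hModd; rw [hMv] at this
            exact (Int.odd_pow.mp this).resolve_right (by norm_num)
          have hov : Odd v := by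
            have h' := hPodd; rw [hPv] at h'
            have := (Int.odd_mul.mp h').2
            exact (Int.odd_pow.mp this).resolve_right (by norm_num)
          have hcast := congrArg (fun z : ℤ => (z : ZMod 16)) hsum
          push_cast at hcast
          rw [zodd4 u hou, zodd4 v hov] at hcast
          exact zc2 (r1 : ZMod 16) (by rw [← hcast]; norm_num)

  · -- gcd ≥ 2 : divide through by a common prime
    obtain ⟨p, hp, hpd⟩ := Nat.exists_prime_and_dvd (by omega : Int.gcd b c ≠ 1)
    have hpb : (p:ℤ) ∣ b := dvd_trans (Int.natCast_dvd_natCast.mpr hpd) (Int.gcd_dvd_left b c)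
    have hpc : (p:ℤ) ∣ c := dvd_trans (Int.natCast_dvd_natCast.mpr hpd) (Int.gcd_dvd_right b c)
    have hpp : Prime (p:ℤ) := Nat.prime_iff_prime_int.mp hp
    have hd4 : (p:ℤ)^4 ∣ 3 * a^4 := by
      have h1 : 3*a^4 = c^4 - b^4 := by linarith
      rw [h1]
      exact dvd_sub (pow_dvd_pow_of_dvd hpc 4) (pow_dvd_pow_of_dvd hpb 4)
    have hpa : (p:ℤ) ∣ a := by
      rcases hpp.dvd_mul.mp (dvd_trans (dvd_pow_self (p:ℤ) (by norm_num : (4:ℕ) ≠ 0)) hd4)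
        with h3 | ha4
      · -- p ∣ 3, so p = 3
        have hp3 : p = 3 := by
          have : (p:ℤ) ∣ ((3:ℕ):ℤ) := by exact_mod_cast h3
          have := Int.natCast_dvd_natCast.mp this
          rcases (Nat.prime_three).eq_one_or_self_of_dvd p this with h1 | h1
          · exact absurd h1 hp.ne_one
          · exact h1
        subst hp3
        obtain ⟨k, hk⟩ := hd4
        have h27 : a^4 = 27*k := by push_cast at hk; linarith
        have : (3:ℤ) ∣ a^4 := ⟨9*k, by linarith⟩
        exact hpp.dvd_of_dvd_pow (by exact_mod_cast this)
      · exact hpp.dvd_of_dvd_pow ha4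
    obtain ⟨a1, rfl⟩ := hpa
    obtain ⟨b1, rfl⟩ := hpb
    obtain ⟨c1, rfl⟩ := hpc
    have hpne : ((p:ℤ)) ≠ 0 := by exact_mod_cast hp.ne_zero
    have heq1 : 3*a1^4 + b1^4 = c1^4 := by
      apply mul_left_cancel₀ (pow_ne_zero 4 hpne)
      linear_combination h
    have hc1ne : c1 ≠ 0 := by
      intro h0; rw [h0, mul_zero] at hcne; exact hcne rfl
    have hlt : c1.natAbs < ((p:ℤ)*c1).natAbs := by
      rw [Int.natAbs_mul, Int.natAbs_natCast]
      have h1 : c1.natAbs ≠ 0 := Int.natAbs_ne_zero.mpr hc1ne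
      have h2 : 2 ≤ p := hp.two_le
      nlinarith [Nat.one_le_iff_ne_zero.mpr h1]
    have ha1 : a1 = 0 := IH c1.natAbs (lt_of_lt_of_le hlt hcn) a1 b1 c1 le_rfl heq1
    rw [ha1, mul_zero]

theorem stmt_6 (x₁ x₂ x₃ : ℤ) (h : 3 * x₁ ^ 4 + x₂ ^ 4 = x₃ ^ 4) : x₁ = 0 := by
  exact key x₃.natAbs x₁ x₂ x₃ le_rfl h
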